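/- Let P be a partially ordered set, F a field, and x ∈ P. Then: (1) the lattice of subfunctors of h_x is finite if and only if the principal lower set ↓x = { y ∈ P : y ≤ x } is a finite set; (2) the lattice of subfunctors of h_x satisfies the ascending chain condition (every ascending chain of subfunctors stabilises) if and only if every ascending chain of lower sets of ↓x stabilises. -/

import Mathlib

open CategoryTheory CategoryTheory.Limits

noncomputable section

open Classical in
/-- `dimP x y = 1` if `y ≤ x`, and `0` otherwise. -/
def dimP {P : Type} [PartialOrder P] (x y : P) : ℕ := if y ≤ x then 1 else 0

lemma dimP_eq_one_iff {P : Type} [PartialOrder P] {x y : P} :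
    dimP x y = 1 ↔ y ≤ x := by
  unfold dimP; split <;> simp_all

lemma dimP_le_one {P : Type} [PartialOrder P] (x y : P) : dimP x y ≤ 1 := by
  unfold dimP; split <;> omega

variable (P : Type) [PartialOrder P] (F : Type) [Field F]

/-- The structure maps of the representable representation `h_x`. -/
def hMap (x s t : P) : (Fin (dimP x s) → F) →ₗ[F] (Fin (dimP x t) → F) where
  toFun f _ := if h : dimP x s = 1 then f ⟨0, by omega⟩ else 0
  map_add' f g := by
    funext k
    by_cases h : dimP x s = 1 <;> simp [h]
  map_smul' c f := by
    funext k
    by_cases h : dimP x s = 1 <;> simp [h]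

lemma hMap_apply (x s t : P) (f : Fin (dimP x s) → F) (k : Fin (dimP x t)) :
    hMap P F x s t f k = if h : dimP x s = 1 then f ⟨0, by omega⟩ else 0 := rfl

/-- The representable representation `h_x : Pᵒᵖ ⥤ ModuleCat F`, with value `F`
at `y` if `y ≤ x` and `0` otherwise, and identity structure maps whenever both
values are `F`. -/
def hRep (x : P) : Pᵒᵖ ⥤ ModuleCat.{0} F where
  obj y := ModuleCat.of F (Fin (dimP x y.unop) → F)
  map {y z} _ := ModuleCat.ofHom (hMap P F x y.unop z.unop)
  map_id y := by
    refine ModuleCat.hom_ext (LinearMap.ext fun f => ?_)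
    funext k
    show hMap P F x y.unop y.unop f k = f k
    rw [hMap_apply]
    have hk := k.isLt
    have hle := dimP_le_one x y.unop
    have h1 : dimP x y.unop = 1 := by omega
    rw [dif_pos h1]
    congr 1
    exact Fin.ext (by omega)
  map_comp {i j k} f g := by
    have hij : j.unop ≤ i.unop := (leOfHom f.unop)
    have hjk : k.unop ≤ j.unop := (leOfHom g.unop)
    refine ModuleCat.hom_ext (LinearMap.ext fun v => ?_)
    funext l
    show hMap P F x i.unop k.unop v l =
      hMap P F x j.unop k.unop (hMap P F x i.unop j.unop v) l
    simp only [hMap_apply]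
    by_cases hi : dimP x i.unop = 1
    · have hj1 : dimP x j.unop = 1 := by
        rw [dimP_eq_one_iff] at *
        exact le_trans hij hi
      rw [dif_pos hi, dif_pos hj1]
    · rw [dif_neg hi]
      by_cases hj : dimP x j.unop = 1
      · rw [dif_pos hj]
        try rw [dif_neg hi]
      · rw [dif_neg hj]

/-- A subfunctor of a representation `G : Pᵒᵖ ⥤ ModuleCat F`: a family of
submodules of the values of `G` which is closed under the structure maps. -/
@[ext]
structure Subfunctor {P : Type} [PartialOrder P] {F : Type} [Field F]
    (G : Pᵒᵖ ⥤ ModuleCat.{0} F) where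
  toFun : ∀ y : Pᵒᵖ, Submodule F (G.obj y)
  map_le : ∀ {y z : Pᵒᵖ} (f : y ⟶ z), (toFun y).map (G.map f).hom ≤ toFun z

namespace Subfunctor

variable {P F} {G : Pᵒᵖ ⥤ ModuleCat.{0} F}

instance : PartialOrder (_root_.Subfunctor G) where
  le S T := ∀ y, S.toFun y ≤ T.toFun y
  le_refl S y := le_refl _
  le_trans S T U h h' y := le_trans (h y) (h' y)
  le_antisymm S T h h' := by
    ext y v
    exact ⟨fun hv => h y hv, fun hv => h' y hv⟩

/-- The lattice of subfunctors, with pointwise join and meet. -/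
instance : Lattice (_root_.Subfunctor G) where
  sup S T := ⟨fun y => S.toFun y ⊔ T.toFun y, fun {y z} f => by
    rw [Submodule.map_sup]
    exact sup_le_sup (S.map_le f) (T.map_le f)⟩
  le_sup_left S T y := le_sup_left
  le_sup_right S T y := le_sup_right
  sup_le S T U h h' y := sup_le (h y) (h' y)
  inf S T := ⟨fun y => S.toFun y ⊓ T.toFun y, fun {y z} f =>
    le_trans (Submodule.map_inf_le _) (inf_le_inf (S.map_le f) (T.map_le f))⟩
  inf_le_left S T y := inf_le_left
  inf_le_right S T y := inf_le_right
  le_inf S T U h h' y := le_inf (h y) (h' y)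

end Subfunctor

end

noncomputable section Aux

open Classical

variable {P : Type} [PartialOrder P] {F : Type} [Field F]

lemma submodule_dichotomy {n : ℕ} (hn : n ≤ 1) (S : Submodule F (Fin n → F)) :
    S = ⊥ ∨ S = ⊤ := by
  interval_cases n
  · left
    rw [eq_bot_iff]
    intro v _
    rw [Submodule.mem_bot]
    exact Subsingleton.elim v 0
  · by_cases hb : S = ⊥
    · exact Or.inl hb
    · right
      obtain ⟨v, hv, hv0⟩ := Submodule.ne_bot_iff S |>.mp hb
      have hv0' : v 0 ≠ 0 := by
        intro h
        apply hv0
        funext k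
        simp [Subsingleton.elim k 0, h]
      rw [Submodule.eq_top_iff']
      intro w
      have : w = (w 0 * (v 0)⁻¹) • v := by
        funext k
        rw [Subsingleton.elim k 0]
        simp [mul_assoc, inv_mul_cancel₀ hv0']
      rw [this]
      exact S.smul_mem _ hv

lemma hMap_surjective (x s t : P) (hs : dimP x s = 1) (ht : dimP x t = 1) :
    Function.Surjective (hMap P F x s t) := by
  intro w
  refine ⟨fun _ => w ⟨0, by omega⟩, ?_⟩
  funext k
  rw [hMap_apply, dif_pos hs]
  have := k.isLt
  congr 1
  exact Fin.ext (by omega)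

variable (x : P)

/-- From a subfunctor of `h_x` to a lower set of `↓x`. -/
def toLower (S : _root_.Subfunctor (hRep P F x)) : LowerSet {y : P // y ≤ x} where
  carrier := {q | S.toFun (Opposite.op q.1) = ⊤}
  lower' := by
    intro q q' hle hq
    let f : (Opposite.op q.1 : Pᵒᵖ) ⟶ Opposite.op q'.1 :=
      (homOfLE (show q'.1 ≤ q.1 from hle)).op
    have hmap := S.map_le f
    rw [show S.toFun (Opposite.op q.1) = ⊤ from hq] at hmap
    have hsurj : Function.Surjective ((hRep P F x).map f).hom :=
      hMap_surjective x q.1 q'.1 (dimP_eq_one_iff.mpr q.2) (dimP_eq_one_iff.mpr q'.2)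
    rw [Submodule.map_top, LinearMap.range_eq_top.mpr hsurj] at hmap
    exact top_le_iff.mp hmap

lemma toLower_mono {S T : _root_.Subfunctor (hRep P F x)} (h : S ≤ T) :
    toLower x S ≤ toLower x T := by
  intro q hq
  have := h (Opposite.op q.1)
  rw [show S.toFun (Opposite.op q.1) = ⊤ from hq] at this
  exact top_le_iff.mp this

/-- From a lower set of `↓x` to a subfunctor of `h_x`. -/
def ofLower (L : LowerSet {y : P // y ≤ x}) : _root_.Subfunctor (hRep P F x) where
  toFun y := if h : ∃ hy : y.unop ≤ x, (⟨y.unop, hy⟩ : {y : P // y ≤ x}) ∈ L then ⊤ else ⊥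
  map_le {y z} f := by
    by_cases h : ∃ hy : y.unop ≤ x, (⟨y.unop, hy⟩ : {y : P // y ≤ x}) ∈ L
    · obtain ⟨hy, hmem⟩ := h
      have hz : z.unop ≤ x := le_trans (leOfHom f.unop) hy
      have hmz : (⟨z.unop, hz⟩ : {y : P // y ≤ x}) ∈ L :=
        L.lower (show (⟨z.unop, hz⟩ : {y : P // y ≤ x}) ≤ ⟨y.unop, hy⟩ from leOfHom f.unop)
          hmem
      rw [dif_pos ⟨hy, hmem⟩, dif_pos ⟨hz, hmz⟩]
      exact le_top
    · rw [dif_neg h, Submodule.map_bot]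
      exact bot_le

lemma ofLower_mono {L M : LowerSet {y : P // y ≤ x}} (h : L ≤ M) :
    ofLower (F := F) x L ≤ ofLower x M := by
  intro y
  show (ofLower x L).toFun y ≤ (ofLower x M).toFun y
  unfold ofLower
  dsimp only
  by_cases hc : ∃ hy : y.unop ≤ x, (⟨y.unop, hy⟩ : {y : P // y ≤ x}) ∈ L
  · obtain ⟨hy, hmem⟩ := hc
    rw [dif_pos ⟨hy, hmem⟩, dif_pos ⟨hy, h hmem⟩]
  · rw [dif_neg hc]
    exact bot_le

lemma toLower_ofLower (L : LowerSet {y : P // y ≤ x}) : toLower x (ofLower (F := F) x L) = L := by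
  ext q
  show (ofLower x L).toFun (Opposite.op q.1) = ⊤ ↔ q ∈ L
  unfold ofLower
  dsimp only
  constructor
  · intro h
    by_cases hc : ∃ hy : (Opposite.op q.1).unop ≤ x,
        (⟨(Opposite.op q.1).unop, hy⟩ : {y : P // y ≤ x}) ∈ L
    · obtain ⟨hy, hmem⟩ := hc
      convert hmem
    · rw [dif_neg hc] at h
      exfalso
      have h1 : dimP x q.1 = 1 := dimP_eq_one_iff.mpr q.2
      have hmem : (fun _ => (1 : F)) ∈
          (⊥ : Submodule F (Fin (dimP x ((Opposite.op q.1).unop)) → F)) := by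
        rw [show (⊥ : Submodule F (Fin (dimP x ((Opposite.op q.1).unop)) → F)) = ⊤ from h]; trivial
      rw [Submodule.mem_bot] at hmem
      have h2 := congrFun hmem
        ⟨0, by rw [show (Opposite.op q.1).unop = q.1 from rfl, h1]; omega⟩
      simpa using h2
  · intro h
    have : (⟨(Opposite.op q.1).unop, q.2⟩ : {y : P // y ≤ x}) ∈ L := h
    rw [dif_pos ⟨q.2, this⟩]

lemma ofLower_toLower (S : _root_.Subfunctor (hRep P F x)) : ofLower x (toLower x S) = S := by
  ext y v
  have key : (ofLower x (toLower x S)).toFun y = S.toFun y := by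
    unfold ofLower
    dsimp only
    by_cases hy : y.unop ≤ x
    · have h1 : dimP x y.unop = 1 := dimP_eq_one_iff.mpr hy
      rcases submodule_dichotomy (le_of_eq h1) (S.toFun y) with hb | ht
      · rw [hb, dif_neg]; rfl
        rintro ⟨hy', hmem⟩
        have : S.toFun (Opposite.op y.unop) = ⊤ := hmem
        rw [show Opposite.op y.unop = y from rfl] at this
        rw [this] at hb
        have : Nontrivial (Fin (dimP x y.unop) → F) := by rw [h1]; infer_instance
        exact absurd hb (top_ne_bot (α := Submodule F (Fin (dimP x y.unop) → F)))
      · rw [ht, dif_pos]; rfl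
        refine ⟨hy, ?_⟩
        show S.toFun (Opposite.op y.unop) = ⊤
        rw [show Opposite.op y.unop = y from rfl]
        exact ht
    · have h0 : dimP x y.unop = 0 := by
        unfold dimP
        rw [if_neg hy]
      have hss : Subsingleton (Fin (dimP x y.unop) → F) := by rw [h0]; infer_instance
      rw [dif_neg (by rintro ⟨hy', _⟩; exact hy hy')]
      symm
      rw [eq_bot_iff]
      intro v _
      rw [Submodule.mem_bot]
      exact @Subsingleton.elim _ hss v 0
  rw [key]

/-- The order isomorphism between subfunctors of `h_x` and lower sets of `↓x`. -/
def subfunctorIso : _root_.Subfunctor (hRep P F x) ≃o LowerSet {y : P // y ≤ x} where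
  toFun := toLower x
  invFun := ofLower x
  left_inv := ofLower_toLower x
  right_inv := toLower_ofLower x
  map_rel_iff' := by
    intro S T
    simp only [Equiv.coe_fn_mk]
    constructor
    · intro h
      have := ofLower_mono (F := F) x h
      rwa [ofLower_toLower, ofLower_toLower] at this
    · exact toLower_mono x

lemma finite_lowerSet_iff (Q : Type) [PartialOrder Q] :
    Finite (LowerSet Q) ↔ Finite Q := by
  constructor
  · intro h
    refine Finite.of_injective (fun q => LowerSet.Iic q) ?_
    intro a b hab
    simp only at hab
    have ha : a ∈ LowerSet.Iic b := by rw [← hab]; exact LowerSet.mem_Iic_iff.mpr le_rfl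
    have hb : b ∈ LowerSet.Iic a := by rw [hab]; exact LowerSet.mem_Iic_iff.mpr le_rfl
    exact le_antisymm (LowerSet.mem_Iic_iff.mp ha) (LowerSet.mem_Iic_iff.mp hb)
  · intro h
    exact Finite.of_injective (fun L : LowerSet Q => (L : Set Q)) SetLike.coe_injective

end Aux

theorem subfunctor_chain_conditions
    (P : Type) [PartialOrder P] (F : Type) [Field F] (x : P) :
    (Finite (_root_.Subfunctor (hRep P F x)) ↔ Finite {y : P // y ≤ x}) ∧
    ((∀ c : ℕ →o _root_.Subfunctor (hRep P F x), ∃ N, ∀ m, N ≤ m → c m = c N) ↔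
      (∀ c : ℕ →o LowerSet {y : P // y ≤ x}, ∃ N, ∀ m, N ≤ m → c m = c N)) := by
  have e := subfunctorIso (F := F) x
  constructor
  · constructor
    · intro h
      exact (finite_lowerSet_iff _).mp (Finite.of_equiv _ e.toEquiv)
    · intro h
      have : Finite (LowerSet {y : P // y ≤ x}) := (finite_lowerSet_iff _).mpr h
      exact Finite.of_equiv _ e.symm.toEquiv
  · constructor
    · intro h c
      obtain ⟨N, hN⟩ := h ⟨fun n => e.symm (c n), fun a b hab => e.symm.monotone (c.mono hab)⟩
      refine ⟨N, fun m hm => ?_⟩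
      have := hN m hm
      simpa using congrArg e (show e.symm (c m) = e.symm (c N) from this)
    · intro h c
      obtain ⟨N, hN⟩ := h ⟨fun n => e (c n), fun a b hab => e.monotone (c.mono hab)⟩
      refine ⟨N, fun m hm => ?_⟩
      have := hN m hm
      simpa using congrArg e.symm (show e (c m) = e (c N) from this)
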